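/- Let m be a positive integer and P ⊆ [1..m]² a set of lattice points. Suppose that for every p ∈ P, the set of points of P strictly dominated by p (both coordinates strictly smaller) can be partitioned into at most two chains under the coordinatewise (dominance) order. Then there is an absolute constant C such that |P| ≤ C·m. -/

import Mathlib

open Finset

private def blk (q : ℕ × ℕ) : ℕ × ℕ := ((q.1 + 15) / 16, (q.2 + 15) / 16)

private def NoViol (P : Finset (ℕ × ℕ)) : Prop :=
  ∀ p ∈ P, ∀ q1 ∈ P, ∀ q2 ∈ P, ∀ q3 ∈ P,
    q1.1 < q2.1 → q2.1 < q3.1 → q3.1 < p.1 →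
    q3.2 < q2.2 → q2.2 < q1.2 → q1.2 < p.2 → False

private lemma blt {a b : ℕ} (h : (a + 15) / 16 < (b + 15) / 16) : a < b := by omega

private lemma noViol_blk {P : Finset (ℕ × ℕ)} (h : NoViol P) : NoViol (P.image blk) := by
  intro bp hbp b1 hb1 b2 hb2 b3 hb3 h12 h23 h3p k32 k21 k1p
  obtain ⟨p, hp, rfl⟩ := mem_image.1 hbp
  obtain ⟨q1, hq1, rfl⟩ := mem_image.1 hb1
  obtain ⟨q2, hq2, rfl⟩ := mem_image.1 hb2
  obtain ⟨q3, hq3, rfl⟩ := mem_image.1 hb3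
  exact h p hp q1 hq1 q2 hq2 q3 hq3 (blt h12) (blt h23) (blt h3p) (blt k32) (blt k21) (blt k1p)

private noncomputable def pick4 (s : Finset ℕ) : Finset ℕ :=
  if h : 4 ≤ s.card then (Finset.exists_subset_card_eq h).choose else ∅

private lemma pick4_spec {s : Finset ℕ} (h : 4 ≤ s.card) :
    pick4 s ⊆ s ∧ (pick4 s).card = 4 := by
  rw [pick4, dif_pos h]
  exact (Finset.exists_subset_card_eq h).choose_spec

private lemma wide_col_bound {P : Finset (ℕ × ℕ)} (hNV : NoViol P) (j : ℕ) :
    ((((P.image blk).filter fun b =>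
        4 ≤ ((P.filter fun q => blk q = b).image Prod.fst).card).filter
        fun b => b.1 = j)).card ≤ 5460 := by
  classical
  by_contra hbig
  push_neg at hbig
  set G := (((P.image blk).filter fun b =>
      4 ≤ ((P.filter fun q => blk q = b).image Prod.fst).card).filter
      fun b => b.1 = j) with hG
  have hwide : ∀ b ∈ G, 4 ≤ ((P.filter fun q => blk q = b).image Prod.fst).card := by
    intro b hb
    exact (mem_filter.1 (mem_filter.1 hb).1).2
  have hj : ∀ b ∈ G, b.1 = j := fun b hb => (mem_filter.1 hb).2
  -- the chosen 4-subset of x-values lies in the 16-window of column j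
  have maps : ∀ b ∈ G, pick4 ((P.filter fun q => blk q = b).image Prod.fst) ∈
      (Finset.Icc (16 * j - 15) (16 * j)).powersetCard 4 := by
    intro b hb
    obtain ⟨hsub, hcard⟩ := pick4_spec (hwide b hb)
    rw [Finset.mem_powersetCard]
    refine ⟨hsub.trans ?_, hcard⟩
    intro x hx
    obtain ⟨q, hq, rfl⟩ := mem_image.1 hx
    have hbq : blk q = b := (mem_filter.1 hq).2
    have h1 : (q.1 + 15) / 16 = j := by
      have h := congrArg Prod.fst hbq
      rw [hj b hb] at h
      exact h
    simp only [mem_Icc]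
    omega
  have hcod : ((Finset.Icc (16 * j - 15) (16 * j)).powersetCard 4).card * 3 < G.card := by
    rw [Finset.card_powersetCard, Nat.card_Icc]
    have h16 : (16 * j + 1 - (16 * j - 15)) ≤ 16 := by omega
    have := Nat.choose_le_choose 4 h16
    have h1820 : Nat.choose 16 4 = 1820 := by decide
    omega
  obtain ⟨c, hcmem, hcfib⟩ :=
    Finset.exists_lt_card_fiber_of_mul_lt_card_of_maps_to maps hcod
  obtain ⟨hcsub, hc4⟩ := Finset.mem_powersetCard.1 hcmem
  set H := G.filter (fun b => pick4 ((P.filter fun q => blk q = b).image Prod.fst) = c) with hH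
  have hHG : H ⊆ G := filter_subset _ _
  -- second coordinates of blocks in H are distinct
  have hinj : (H.image Prod.snd).card = H.card := by
    apply Finset.card_image_of_injOn
    intro a ha b hb hab
    exact Prod.ext (by rw [hj a (hHG ha), hj b (hHG hb)]) hab
  have h4 : 4 ≤ (H.image Prod.snd).card := by
    rw [hinj]; omega
  obtain ⟨t, hts, htc⟩ := Finset.exists_subset_card_eq h4
  set e := t.orderEmbOfFin htc with he
  have hblkmem : ∀ i : Fin 4, ((j, e i) : ℕ × ℕ) ∈ H := by
    intro i
    have : e i ∈ H.image Prod.snd := hts (t.orderEmbOfFin_mem htc i)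
    obtain ⟨b, hbH, hb2⟩ := mem_image.1 this
    have hb1 : b.1 = j := hj b (hHG hbH)
    have hbe : b = (j, e i) := Prod.ext hb1 hb2
    rwa [hbe] at hbH
  have hpt : ∀ i : Fin 4, ∀ x ∈ c, ∃ q, q ∈ P ∧ blk q = ((j, e i) : ℕ × ℕ) ∧ q.1 = x := by
    intro i x hx
    have hBH := hblkmem i
    have hpickc : pick4 ((P.filter fun q => blk q = ((j, e i) : ℕ × ℕ)).image Prod.fst) = c :=
      (mem_filter.1 hBH).2
    have hw := hwide _ (hHG hBH)
    have hsub := (pick4_spec hw).1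
    rw [hpickc] at hsub
    obtain ⟨q, hq, rfl⟩ := mem_image.1 (hsub hx)
    exact ⟨q, (mem_filter.1 hq).1, (mem_filter.1 hq).2, rfl⟩
  set f := c.orderEmbOfFin hc4 with hf
  have hfm : ∀ i : Fin 4, f i ∈ c := fun i => c.orderEmbOfFin_mem hc4 i
  obtain ⟨p, hpP, hpB, hpx⟩ := hpt 3 (f 3) (hfm 3)
  obtain ⟨q1, h1P, h1B, h1x⟩ := hpt 2 (f 0) (hfm 0)
  obtain ⟨q2, h2P, h2B, h2x⟩ := hpt 1 (f 1) (hfm 1)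
  obtain ⟨q3, h3P, h3B, h3x⟩ := hpt 0 (f 2) (hfm 2)
  have hfs : StrictMono f := (c.orderEmbOfFin hc4).strictMono
  have hes : StrictMono e := (t.orderEmbOfFin htc).strictMono
  -- y-coordinates: block row determines order
  have ylt : ∀ (a b : ℕ × ℕ) (ia ib : Fin 4), blk a = (j, e ia) → blk b = (j, e ib) →
      ia < ib → a.2 < b.2 := by
    intro a b ia ib haB hbB hab
    have ha2 : (a.2 + 15) / 16 = e ia := congrArg Prod.snd haB
    have hb2 : (b.2 + 15) / 16 = e ib := congrArg Prod.snd hbB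
    exact blt (by rw [ha2, hb2]; exact hes hab)
  exact hNV p hpP q1 h1P q2 h2P q3 h3P
    (by rw [h1x, h2x]; exact hfs (by decide))
    (by rw [h2x, h3x]; exact hfs (by decide))
    (by rw [h3x, hpx]; exact hfs (by decide))
    (ylt q3 q2 0 1 h3B h2B (by decide))
    (ylt q2 q1 1 2 h2B h1B (by decide))
    (ylt q1 p 2 3 h1B hpB (by decide))

private lemma tall_row_bound {P : Finset (ℕ × ℕ)} (hNV : NoViol P) (r : ℕ) :
    ((((P.image blk).filter fun b =>
        4 ≤ ((P.filter fun q => blk q = b).image Prod.snd).card).filter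
        fun b => b.2 = r)).card ≤ 5460 := by
  classical
  by_contra hbig
  push_neg at hbig
  set G := (((P.image blk).filter fun b =>
      4 ≤ ((P.filter fun q => blk q = b).image Prod.snd).card).filter
      fun b => b.2 = r) with hG
  have hwide : ∀ b ∈ G, 4 ≤ ((P.filter fun q => blk q = b).image Prod.snd).card := by
    intro b hb
    exact (mem_filter.1 (mem_filter.1 hb).1).2
  have hj : ∀ b ∈ G, b.2 = r := fun b hb => (mem_filter.1 hb).2
  have maps : ∀ b ∈ G, pick4 ((P.filter fun q => blk q = b).image Prod.snd) ∈
      (Finset.Icc (16 * r - 15) (16 * r)).powersetCard 4 := by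
    intro b hb
    obtain ⟨hsub, hcard⟩ := pick4_spec (hwide b hb)
    rw [Finset.mem_powersetCard]
    refine ⟨hsub.trans ?_, hcard⟩
    intro y hy
    obtain ⟨q, hq, rfl⟩ := mem_image.1 hy
    have hbq : blk q = b := (mem_filter.1 hq).2
    have h1 : (q.2 + 15) / 16 = r := by
      have h := congrArg Prod.snd hbq
      rw [hj b hb] at h
      exact h
    simp only [mem_Icc]
    omega
  have hcod : ((Finset.Icc (16 * r - 15) (16 * r)).powersetCard 4).card * 3 < G.card := by
    rw [Finset.card_powersetCard, Nat.card_Icc]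
    have h16 : (16 * r + 1 - (16 * r - 15)) ≤ 16 := by omega
    have := Nat.choose_le_choose 4 h16
    have h1820 : Nat.choose 16 4 = 1820 := by decide
    omega
  obtain ⟨c, hcmem, hcfib⟩ :=
    Finset.exists_lt_card_fiber_of_mul_lt_card_of_maps_to maps hcod
  obtain ⟨hcsub, hc4⟩ := Finset.mem_powersetCard.1 hcmem
  set H := G.filter (fun b => pick4 ((P.filter fun q => blk q = b).image Prod.snd) = c) with hH
  have hHG : H ⊆ G := filter_subset _ _
  have hinj : (H.image Prod.fst).card = H.card := by
    apply Finset.card_image_of_injOn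
    intro a ha b hb hab
    exact Prod.ext hab (by rw [hj a (hHG ha), hj b (hHG hb)])
  have h4 : 4 ≤ (H.image Prod.fst).card := by
    rw [hinj]; omega
  obtain ⟨t, hts, htc⟩ := Finset.exists_subset_card_eq h4
  set e := t.orderEmbOfFin htc with he
  have hblkmem : ∀ i : Fin 4, ((e i, r) : ℕ × ℕ) ∈ H := by
    intro i
    have : e i ∈ H.image Prod.fst := hts (t.orderEmbOfFin_mem htc i)
    obtain ⟨b, hbH, hb1⟩ := mem_image.1 this
    have hb2 : b.2 = r := hj b (hHG hbH)
    have hbe : b = (e i, r) := Prod.ext hb1 hb2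
    rwa [hbe] at hbH
  have hpt : ∀ i : Fin 4, ∀ y ∈ c, ∃ q, q ∈ P ∧ blk q = ((e i, r) : ℕ × ℕ) ∧ q.2 = y := by
    intro i y hy
    have hBH := hblkmem i
    have hpickc : pick4 ((P.filter fun q => blk q = ((e i, r) : ℕ × ℕ)).image Prod.snd) = c :=
      (mem_filter.1 hBH).2
    have hw := hwide _ (hHG hBH)
    have hsub := (pick4_spec hw).1
    rw [hpickc] at hsub
    obtain ⟨q, hq, rfl⟩ := mem_image.1 (hsub hy)
    exact ⟨q, (mem_filter.1 hq).1, (mem_filter.1 hq).2, rfl⟩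
  set f := c.orderEmbOfFin hc4 with hf
  have hfm : ∀ i : Fin 4, f i ∈ c := fun i => c.orderEmbOfFin_mem hc4 i
  obtain ⟨p, hpP, hpB, hpy⟩ := hpt 3 (f 3) (hfm 3)
  obtain ⟨q1, h1P, h1B, h1y⟩ := hpt 0 (f 2) (hfm 2)
  obtain ⟨q2, h2P, h2B, h2y⟩ := hpt 1 (f 1) (hfm 1)
  obtain ⟨q3, h3P, h3B, h3y⟩ := hpt 2 (f 0) (hfm 0)
  have hfs : StrictMono f := (c.orderEmbOfFin hc4).strictMono
  have hes : StrictMono e := (t.orderEmbOfFin htc).strictMono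
  have xlt : ∀ (a b : ℕ × ℕ) (ia ib : Fin 4), blk a = (e ia, r) → blk b = (e ib, r) →
      ia < ib → a.1 < b.1 := by
    intro a b ia ib haB hbB hab
    have ha1 : (a.1 + 15) / 16 = e ia := congrArg Prod.fst haB
    have hb1 : (b.1 + 15) / 16 = e ib := congrArg Prod.fst hbB
    exact blt (by rw [ha1, hb1]; exact hes hab)
  exact hNV p hpP q1 h1P q2 h2P q3 h3P
    (xlt q1 q2 0 1 h1B h2B (by decide))
    (xlt q2 q3 1 2 h2B h3B (by decide))
    (xlt q3 p 2 3 h3B hpB (by decide))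
    (by rw [h3y, h2y]; exact hfs (by decide))
    (by rw [h2y, h1y]; exact hfs (by decide))
    (by rw [h1y, hpy]; exact hfs (by decide))

private lemma fiber_card_le_256 {P : Finset (ℕ × ℕ)} (b : ℕ × ℕ) :
    (P.filter fun q => blk q = b).card ≤ 256 := by
  classical
  have hsub : (P.filter fun q => blk q = b) ⊆
      Finset.Icc (16 * b.1 - 15) (16 * b.1) ×ˢ Finset.Icc (16 * b.2 - 15) (16 * b.2) := by
    intro q hq
    have hbq : blk q = b := (mem_filter.1 hq).2
    have h1 : (q.1 + 15) / 16 = b.1 := congrArg Prod.fst hbq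
    have h2 : (q.2 + 15) / 16 = b.2 := congrArg Prod.snd hbq
    simp only [mem_product, mem_Icc]
    omega
  refine le_trans (card_le_card hsub) ?_
  rw [card_product, Nat.card_Icc, Nat.card_Icc]
  have a1 : 16 * b.1 + 1 - (16 * b.1 - 15) ≤ 16 := by omega
  have a2 : 16 * b.2 + 1 - (16 * b.2 - 15) ≤ 16 := by omega
  calc (16 * b.1 + 1 - (16 * b.1 - 15)) * (16 * b.2 + 1 - (16 * b.2 - 15))
      ≤ 16 * 16 := Nat.mul_le_mul a1 a2
    _ = 256 := by norm_num

private lemma fiber_card_le_9 {P : Finset (ℕ × ℕ)} (b : ℕ × ℕ)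
    (hx : ((P.filter fun q => blk q = b).image Prod.fst).card ≤ 3)
    (hy : ((P.filter fun q => blk q = b).image Prod.snd).card ≤ 3) :
    (P.filter fun q => blk q = b).card ≤ 9 := by
  classical
  set F := P.filter fun q => blk q = b with hF
  have hsub : F ⊆ (F.image Prod.fst) ×ˢ (F.image Prod.snd) := by
    intro q hq
    simp only [mem_product]
    exact ⟨mem_image_of_mem _ hq, mem_image_of_mem _ hq⟩
  refine le_trans (card_le_card hsub) ?_
  rw [card_product]
  calc (F.image Prod.fst).card * (F.image Prod.snd).card ≤ 3 * 3 := Nat.mul_le_mul hx hy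
    _ = 9 := by norm_num

private lemma key : ∀ n : ℕ, ∀ P : Finset (ℕ × ℕ),
    (∀ p ∈ P, p.1 ∈ Finset.Icc 1 n ∧ p.2 ∈ Finset.Icc 1 n) → NoViol P →
    P.card ≤ 10000000 * n := by
  intro n
  induction n using Nat.strong_induction_on with
  | _ n IH =>
  intro P hbd hNV
  classical
  by_cases hsmall : n ≤ 20
  · have hsub : P ⊆ Finset.Icc 1 n ×ˢ Finset.Icc 1 n := by
      intro q hq
      simp only [mem_product]
      exact hbd q hq
    have h1 := card_le_card hsub
    rw [card_product, Nat.card_Icc] at h1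
    have h2 : P.card ≤ n * n := by simpa using h1
    calc P.card ≤ n * n := h2
      _ ≤ 10000000 * n := Nat.mul_le_mul_right n (by omega)
  · push_neg at hsmall
    set S := (n + 15) / 16 with hS
    set P' := P.image blk with hP'
    have hbd' : ∀ b ∈ P', b.1 ∈ Finset.Icc 1 S ∧ b.2 ∈ Finset.Icc 1 S := by
      intro b hb
      obtain ⟨q, hq, rfl⟩ := mem_image.1 hb
      obtain ⟨h1, h2⟩ := hbd q hq
      simp only [mem_Icc] at h1 h2 ⊢
      constructor
      · constructor
        · show 1 ≤ (q.1 + 15) / 16; omega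
        · show (q.1 + 15) / 16 ≤ (n + 15) / 16; omega
      · constructor
        · show 1 ≤ (q.2 + 15) / 16; omega
        · show (q.2 + 15) / 16 ≤ (n + 15) / 16; omega
    have hNV' : NoViol P' := noViol_blk hNV
    have hSn : S < n := by omega
    have hIH : P'.card ≤ 10000000 * S := IH S hSn P' hbd' hNV'
    -- fiber decomposition
    have hsum : P.card = ∑ b ∈ P', (P.filter fun q => blk q = b).card :=
      card_eq_sum_card_image blk P
    -- wide / tall predicates
    set Wp : ℕ × ℕ → Prop := fun b => 4 ≤ ((P.filter fun q => blk q = b).image Prod.fst).card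
      with hWp
    set Tp : ℕ × ℕ → Prop := fun b => 4 ≤ ((P.filter fun q => blk q = b).image Prod.snd).card
      with hTp
    have hsplit :
        ∑ b ∈ P', (P.filter fun q => blk q = b).card =
          (∑ b ∈ P'.filter (fun b => Wp b ∨ Tp b), (P.filter fun q => blk q = b).card) +
          ∑ b ∈ P'.filter (fun b => ¬(Wp b ∨ Tp b)), (P.filter fun q => blk q = b).card :=
      (Finset.sum_filter_add_sum_filter_not P' _ _).symm
    -- big blocks
    have hbig1 : (∑ b ∈ P'.filter (fun b => Wp b ∨ Tp b), (P.filter fun q => blk q = b).card)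
        ≤ 256 * (P'.filter (fun b => Wp b ∨ Tp b)).card := by
      calc (∑ b ∈ P'.filter (fun b => Wp b ∨ Tp b), (P.filter fun q => blk q = b).card)
          ≤ ∑ _b ∈ P'.filter (fun b => Wp b ∨ Tp b), 256 :=
            Finset.sum_le_sum fun b _ => fiber_card_le_256 b
        _ = (P'.filter (fun b => Wp b ∨ Tp b)).card * 256 := by rw [Finset.sum_const, smul_eq_mul]
        _ = 256 * (P'.filter (fun b => Wp b ∨ Tp b)).card := Nat.mul_comm _ _
    have hWT : (P'.filter (fun b => Wp b ∨ Tp b)).card ≤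
        (P'.filter Wp).card + (P'.filter Tp).card := by
      rw [filter_or]
      exact card_union_le _ _
    -- wide count
    have hWcount : (P'.filter Wp).card ≤ 5460 * S := by
      have hmaps : ∀ b ∈ P'.filter Wp, b.1 ∈ Finset.Icc 1 S :=
        fun b hb => (hbd' b (mem_of_mem_filter b hb)).1
      have hfib : (P'.filter Wp).card =
          ∑ j ∈ Finset.Icc 1 S, ((P'.filter Wp).filter fun b => b.1 = j).card :=
        card_eq_sum_card_fiberwise hmaps
      rw [hfib]
      calc (∑ j ∈ Finset.Icc 1 S, ((P'.filter Wp).filter fun b => b.1 = j).card)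
          ≤ ∑ _j ∈ Finset.Icc 1 S, 5460 :=
            Finset.sum_le_sum fun j _ => wide_col_bound hNV j
        _ = S * 5460 := by rw [Finset.sum_const, smul_eq_mul, Nat.card_Icc]; omega
        _ = 5460 * S := Nat.mul_comm _ _
    have hTcount : (P'.filter Tp).card ≤ 5460 * S := by
      have hmaps : ∀ b ∈ P'.filter Tp, b.2 ∈ Finset.Icc 1 S :=
        fun b hb => (hbd' b (mem_of_mem_filter b hb)).2
      have hfib : (P'.filter Tp).card =
          ∑ r ∈ Finset.Icc 1 S, ((P'.filter Tp).filter fun b => b.2 = r).card :=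
        card_eq_sum_card_fiberwise hmaps
      rw [hfib]
      calc (∑ r ∈ Finset.Icc 1 S, ((P'.filter Tp).filter fun b => b.2 = r).card)
          ≤ ∑ _r ∈ Finset.Icc 1 S, 5460 :=
            Finset.sum_le_sum fun r _ => tall_row_bound hNV r
        _ = S * 5460 := by rw [Finset.sum_const, smul_eq_mul, Nat.card_Icc]; omega
        _ = 5460 * S := Nat.mul_comm _ _
    -- small blocks
    have hsmallblocks :
        (∑ b ∈ P'.filter (fun b => ¬(Wp b ∨ Tp b)), (P.filter fun q => blk q = b).card)
          ≤ 9 * P'.card := by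
      calc (∑ b ∈ P'.filter (fun b => ¬(Wp b ∨ Tp b)), (P.filter fun q => blk q = b).card)
          ≤ ∑ _b ∈ P'.filter (fun b => ¬(Wp b ∨ Tp b)), 9 := by
            refine Finset.sum_le_sum fun b hb => ?_
            have hnot := (mem_filter.1 hb).2
            push_neg at hnot
            exact fiber_card_le_9 b (by omega) (by omega)
        _ = (P'.filter (fun b => ¬(Wp b ∨ Tp b))).card * 9 := by
            rw [Finset.sum_const, smul_eq_mul]
        _ ≤ P'.card * 9 := Nat.mul_le_mul_right 9 (card_le_card (filter_subset _ _))
        _ = 9 * P'.card := Nat.mul_comm _ _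
    -- assemble
    have htotal : P.card ≤ 256 * (5460 * S + 5460 * S) + 9 * (10000000 * S) := by
      rw [hsum, hsplit]
      have t1 := hbig1
      have t2 := hWT
      have t3 := hWcount
      have t4 := hTcount
      have t5 := hsmallblocks
      have t6 := hIH
      omega
    have h16 : 16 * S ≤ n + 15 ∧ n ≤ 16 * S := by
      constructor <;> omega
    omega

/-- If every point of `P ⊆ [1..m]²` strictly dominates a set of points of `P` that can be
partitioned into at most two chains (under the coordinatewise dominance order), then
`|P| ≤ C · m` for an absolute constant `C`. -/
theorem geom_lemma :
    ∃ C : ℕ, ∀ m : ℕ, 0 < m → ∀ P : Finset (ℕ × ℕ),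
      (∀ p ∈ P, p.1 ∈ Finset.Icc 1 m ∧ p.2 ∈ Finset.Icc 1 m) →
      (∀ p ∈ P, ∃ C1 C2 : Set (ℕ × ℕ),
        {q : ℕ × ℕ | q ∈ P ∧ q.1 < p.1 ∧ q.2 < p.2} = C1 ∪ C2 ∧
        IsChain (· ≤ ·) C1 ∧ IsChain (· ≤ ·) C2) →
      P.card ≤ C * m := by
  refine ⟨10000000, ?_⟩
  intro m _hm P hbd hch
  refine key m P hbd ?_
  intro p hp q1 hq1 q2 hq2 q3 hq3 h12 h23 h3p k32 k21 k1p
  obtain ⟨C1, C2, hun, hc1, hc2⟩ := hch p hp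
  have pair : ∀ (a b : ℕ × ℕ), a.1 < b.1 → b.2 < a.2 →
      ∀ (Cs : Set (ℕ × ℕ)), IsChain (· ≤ ·) Cs → a ∈ Cs → b ∈ Cs → False := by
    intro a b hx hy Cs hCs ha hb
    have hne : a ≠ b := by
      intro h
      rw [h] at hx
      exact lt_irrefl _ hx
    rcases hCs ha hb hne with h | h
    · exact absurd (Prod.le_def.1 h).2 (not_le.2 hy)
    · exact absurd (Prod.le_def.1 h).1 (not_le.2 hx)
  have m1 : q1 ∈ C1 ∪ C2 := by
    rw [← hun]
    exact ⟨hq1, lt_trans (lt_trans h12 h23) h3p, k1p⟩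
  have m2 : q2 ∈ C1 ∪ C2 := by
    rw [← hun]
    exact ⟨hq2, lt_trans h23 h3p, lt_trans k21 k1p⟩
  have m3 : q3 ∈ C1 ∪ C2 := by
    rw [← hun]
    exact ⟨hq3, h3p, lt_trans k32 (lt_trans k21 k1p)⟩
  rcases m1 with h1 | h1 <;> rcases m2 with h2 | h2 <;> rcases m3 with h3 | h3 <;>
    first
      | exact pair q1 q2 h12 k21 _ hc1 h1 h2
      | exact pair q1 q2 h12 k21 _ hc2 h1 h2
      | exact pair q2 q3 h23 k32 _ hc1 h2 h3
      | exact pair q2 q3 h23 k32 _ hc2 h2 h3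
      | exact pair q1 q3 (h12.trans h23) (k32.trans k21) _ hc1 h1 h3
      | exact pair q1 q3 (h12.trans h23) (k32.trans k21) _ hc2 h1 h3
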